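/- Let D ⊆ E be an open convex set on which J(x) is injective and the affine covariant Lipschitz condition ‖J(y)† ∘ (J(x + t(y − x)) − J(x))‖ ≤ ω t ‖y − x‖ holds for all x, y ∈ D and t ∈ [0, 1]. Suppose x, x̂ ∈ D satisfy F(x) = 0 and ‖x̂ − x‖ ≤ η·(Δt)^p for some constants η ≥ 0, Δt ≥ 0 and an integer p ≥ 1. Then the first Newton correction at x̂ satisfies ‖J(x̂)† F(x̂)‖ ≤ η·(Δt)^p · (1 + (ω/2)·η·(Δt)^p). -/

import Mathlib

noncomputable def pinv {n m : ℕ}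
    (A : EuclideanSpace ℂ (Fin n) →L[ℂ] EuclideanSpace ℂ (Fin m)) :
    EuclideanSpace ℂ (Fin m) →L[ℂ] EuclideanSpace ℂ (Fin n) :=
  (ContinuousLinearMap.inverse ((ContinuousLinearMap.adjoint A) ∘L A)) ∘L
    ContinuousLinearMap.adjoint A

lemma pinv_comp_self {n m : ℕ}
    (A : EuclideanSpace ℂ (Fin n) →L[ℂ] EuclideanSpace ℂ (Fin m))
    (hA : Function.Injective A) :
    (pinv A) ∘L A = ContinuousLinearMap.id ℂ _ := by
  set B := (ContinuousLinearMap.adjoint A) ∘L A with hB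
  have hBinj : Function.Injective B := by
    have : LinearMap.ker (B : EuclideanSpace ℂ (Fin n) →ₗ[ℂ] EuclideanSpace ℂ (Fin n)) = ⊥ := by
      rw [LinearMap.ker_eq_bot']
      intro u hu
      have h1 : (inner ℂ (A u) (A u) : ℂ) = 0 := by
        have := ContinuousLinearMap.adjoint_inner_left A u (A u)
        calc (inner ℂ (A u) (A u) : ℂ) = inner ℂ (ContinuousLinearMap.adjoint A (A u)) u := this.symm
        _ = inner ℂ (B u) u := rfl
        _ = 0 := by rw [show B u = 0 from hu]; simp
      have : A u = 0 := by
        have := inner_self_eq_zero (𝕜 := ℂ).mp h1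
        exact this
      exact hA (by simpa using this)
    exact LinearMap.ker_eq_bot.mp this
  have hBbij : Function.Bijective B :=
    ⟨hBinj, (LinearMap.injective_iff_surjective (f := (B : EuclideanSpace ℂ (Fin n) →ₗ[ℂ] EuclideanSpace ℂ (Fin n)))).mp hBinj⟩
  let e : EuclideanSpace ℂ (Fin n) ≃ₗ[ℂ] EuclideanSpace ℂ (Fin n) :=
    LinearEquiv.ofBijective (B : EuclideanSpace ℂ (Fin n) →ₗ[ℂ] EuclideanSpace ℂ (Fin n)) hBbij
  let e' : EuclideanSpace ℂ (Fin n) ≃L[ℂ] EuclideanSpace ℂ (Fin n) := e.toContinuousLinearEquiv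
  have hcoe : (e' : EuclideanSpace ℂ (Fin n) →L[ℂ] EuclideanSpace ℂ (Fin n)) = B := by
    ext v
    rfl
  have hinv : ContinuousLinearMap.inverse B = (e'.symm : _ →L[ℂ] _) := by
    rw [← hcoe, ContinuousLinearMap.inverse_equiv]
  refine ContinuousLinearMap.ext fun v => ?_
  simp only [pinv, ContinuousLinearMap.comp_apply, ContinuousLinearMap.id_apply]
  rw [hinv]
  have : (ContinuousLinearMap.adjoint A) (A v) = e' v := by
    have h2 : ((e' : EuclideanSpace ℂ (Fin n) →L[ℂ] EuclideanSpace ℂ (Fin n)) v) = B v := by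
      rw [hcoe]
    exact h2.symm
  rw [this]
  exact e'.symm_apply_apply v

noncomputable def newtonIter {n m : ℕ}
    (F : EuclideanSpace ℂ (Fin n) → EuclideanSpace ℂ (Fin m))
    (x0 : EuclideanSpace ℂ (Fin n)) : ℕ → EuclideanSpace ℂ (Fin n)
  | 0 => x0
  | (k+1) => newtonIter F x0 k - pinv (fderiv ℂ F (newtonIter F x0 k)) (F (newtonIter F x0 k))

noncomputable def newtonStep {n m : ℕ}
    (F : EuclideanSpace ℂ (Fin n) → EuclideanSpace ℂ (Fin m))
    (x0 : EuclideanSpace ℂ (Fin n)) (k : ℕ) : EuclideanSpace ℂ (Fin n) :=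
  newtonIter F x0 (k+1) - newtonIter F x0 k

/-- Bound on the first Newton correction at a predicted point `x̂` near a zero `x`. -/
theorem first_newton_correction_bound {n m : ℕ} (hn : 0 < n) (hnm : n ≤ m)
    (F : EuclideanSpace ℂ (Fin n) → EuclideanSpace ℂ (Fin m)) (hF : ContDiff ℂ 1 F)
    (D : Set (EuclideanSpace ℂ (Fin n))) (hDopen : IsOpen D) (hDconv : Convex ℝ D)
    (ω : ℝ) (hω : 0 ≤ ω)
    (hinj : ∀ x ∈ D, Function.Injective (fderiv ℂ F x))
    (hLip : ∀ x ∈ D, ∀ y ∈ D, ∀ t ∈ Set.Icc (0:ℝ) 1,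
      ‖(pinv (fderiv ℂ F y)) ∘L (fderiv ℂ F (x + t • (y - x)) - fderiv ℂ F x)‖
        ≤ ω * t * ‖y - x‖)
    (x xhat : EuclideanSpace ℂ (Fin n)) (hx : x ∈ D) (hxhat : xhat ∈ D)
    (hFx : F x = 0) (η Δt : ℝ) (hη : 0 ≤ η) (hΔt : 0 ≤ Δt) (p : ℕ) (hp : 1 ≤ p)
    (hclose : ‖xhat - x‖ ≤ η * Δt ^ p) :
    ‖pinv (fderiv ℂ F xhat) (F xhat)‖
      ≤ η * Δt ^ p * (1 + ω / 2 * (η * Δt ^ p)) := by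
  set d := xhat - x with hd
  set P := pinv (fderiv ℂ F xhat) with hP
  have hJcont : Continuous (fderiv ℂ F) := hF.continuous_fderiv one_ne_zero
  have hlinecont : Continuous fun t : ℝ => x + t • d :=
    continuous_const.add (continuous_id.smul continuous_const)
  have hline : ∀ t ∈ Set.Icc (0:ℝ) 1, x + t • d ∈ D := by
    intro t ht
    have h := hDconv hx hxhat (by linarith [ht.2] : (0:ℝ) ≤ 1 - t) ht.1 (by ring)
    have : (1 - t) • x + t • xhat = x + t • d := by
      simp only [hd, smul_sub, sub_smul, one_smul]; abel
    rwa [this] at h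
  -- FTC
  have hderiv : ∀ t ∈ Set.uIcc (0:ℝ) 1,
      HasDerivAt (fun s : ℝ => F (x + s • d)) ((fderiv ℂ F (x + t • d)) d) t := by
    intro t _
    have h1 : HasDerivAt (fun s : ℝ => x + s • d) d t := by
      simpa using ((hasDerivAt_id t).smul_const d).const_add x
    have h2 : HasFDerivAt F (fderiv ℂ F (x + t • d)) (x + t • d) :=
      (hF.differentiable one_ne_zero (x + t • d)).hasFDerivAt
    exact (h2.restrictScalars ℝ).comp_hasDerivAt t h1
  have hcont : Continuous fun t : ℝ => (fderiv ℂ F (x + t • d)) d :=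
    (hJcont.comp hlinecont).clm_apply continuous_const
  have hint : IntervalIntegrable (fun t : ℝ => (fderiv ℂ F (x + t • d)) d)
      MeasureTheory.volume 0 1 := hcont.intervalIntegrable 0 1
  have hFTC : (∫ t in (0:ℝ)..1, (fderiv ℂ F (x + t • d)) d) = F xhat := by
    rw [intervalIntegral.integral_eq_sub_of_hasDerivAt hderiv hint]
    have e1 : x + (1:ℝ) • d = xhat := by rw [one_smul, hd]; abel
    have e0 : x + (0:ℝ) • d = x := by rw [zero_smul, add_zero]
    rw [e1, e0, hFx, sub_zero]
  have hid : P ∘L (fderiv ℂ F xhat) = ContinuousLinearMap.id ℂ _ :=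
    pinv_comp_self _ (hinj xhat hxhat)
  have hPid : ∀ v, P ((fderiv ℂ F xhat) v) = v := by
    intro v
    have := DFunLike.congr_fun hid v
    simpa using this
  have hPF : P (F xhat) = ∫ t in (0:ℝ)..1, P ((fderiv ℂ F (x + t • d)) d) := by
    rw [← hFTC, ← ContinuousLinearMap.intervalIntegral_comp_comm P hint]
  have hdecomp : ∀ t : ℝ, P ((fderiv ℂ F (x + t • d)) d)
      = d + P ((fderiv ℂ F (x + t • d) - fderiv ℂ F xhat) d) := by
    intro t
    rw [ContinuousLinearMap.sub_apply,
      P.map_sub ((fderiv ℂ F (x + t • d)) d) ((fderiv ℂ F xhat) d), hPid]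
    abel
  have hEcont : Continuous fun t : ℝ => P ((fderiv ℂ F (x + t • d) - fderiv ℂ F xhat) d) :=
    P.continuous.comp (((hJcont.comp hlinecont).sub continuous_const).clm_apply continuous_const)
  have hEint : IntervalIntegrable
      (fun t : ℝ => P ((fderiv ℂ F (x + t • d) - fderiv ℂ F xhat) d))
      MeasureTheory.volume 0 1 := hEcont.intervalIntegrable 0 1
  have hPF2 : P (F xhat)
      = d + ∫ t in (0:ℝ)..1, P ((fderiv ℂ F (x + t • d) - fderiv ℂ F xhat) d) := by
    rw [hPF]
    simp_rw [hdecomp]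
    rw [intervalIntegral.integral_add (intervalIntegrable_const) hEint,
      intervalIntegral.integral_const]
    norm_num
  have hbound : ∀ t ∈ Set.Icc (0:ℝ) 1,
      ‖P ((fderiv ℂ F (x + t • d) - fderiv ℂ F xhat) d)‖ ≤ ω * (1 - t) * ‖d‖ * ‖d‖ := by
    intro t ht
    have hz : x + t • d ∈ D := hline t ht
    have key := hLip (x + t • d) hz xhat hxhat 1 ⟨zero_le_one, le_rfl⟩
    have hz1 : x + t • d + (1:ℝ) • (xhat - (x + t • d)) = xhat := by
      rw [one_smul]; abel
    rw [hz1] at key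
    have hxz : xhat - (x + t • d) = (1 - t) • d := by
      rw [sub_smul, one_smul, hd]; abel
    have hnorm : ‖xhat - (x + t • d)‖ = (1 - t) * ‖d‖ := by
      rw [hxz, norm_smul, Real.norm_eq_abs, abs_of_nonneg (by linarith [ht.2] : (0:ℝ) ≤ 1 - t)]
    have hneg : P ((fderiv ℂ F (x + t • d) - fderiv ℂ F xhat) d)
        = -((P ∘L (fderiv ℂ F xhat - fderiv ℂ F (x + t • d))) d) := by
      rw [ContinuousLinearMap.comp_apply, ContinuousLinearMap.sub_apply,
        ContinuousLinearMap.sub_apply,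
        P.map_sub ((fderiv ℂ F (x + t • d)) d) ((fderiv ℂ F xhat) d),
        P.map_sub ((fderiv ℂ F xhat) d) ((fderiv ℂ F (x + t • d)) d)]
      abel
    rw [hneg, norm_neg]
    calc ‖(P ∘L (fderiv ℂ F xhat - fderiv ℂ F (x + t • d))) d‖
        ≤ ‖P ∘L (fderiv ℂ F xhat - fderiv ℂ F (x + t • d))‖ * ‖d‖ :=
          ContinuousLinearMap.le_opNorm _ _
      _ ≤ (ω * 1 * ‖xhat - (x + t • d)‖) * ‖d‖ :=
          mul_le_mul_of_nonneg_right key (norm_nonneg d)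
      _ = ω * (1 - t) * ‖d‖ * ‖d‖ := by rw [hnorm]; ring
  have hEnormint : IntervalIntegrable
      (fun t : ℝ => ‖P ((fderiv ℂ F (x + t • d) - fderiv ℂ F xhat) d)‖)
      MeasureTheory.volume 0 1 := hEcont.norm.intervalIntegrable 0 1
  have hgint : IntervalIntegrable (fun t : ℝ => ω * (1 - t) * ‖d‖ * ‖d‖)
      MeasureTheory.volume 0 1 :=
    (((continuous_const.mul (continuous_const.sub continuous_id)).mul
      continuous_const).mul continuous_const).intervalIntegrable 0 1
  have hsub : (∫ t in (0:ℝ)..1, (1 - t)) = 1/2 := by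
    have hidint : IntervalIntegrable (fun t : ℝ => t) MeasureTheory.volume 0 1 :=
      continuous_id.intervalIntegrable 0 1
    rw [intervalIntegral.integral_sub intervalIntegrable_const hidint,
      integral_id, integral_one]
    norm_num
  have hgval : (∫ t in (0:ℝ)..1, ω * (1 - t) * ‖d‖ * ‖d‖) = ω / 2 * (‖d‖ * ‖d‖) := by
    have : (fun t : ℝ => ω * (1 - t) * ‖d‖ * ‖d‖)
        = fun t : ℝ => (ω * ‖d‖ * ‖d‖) * (1 - t) := by funext t; ring
    rw [this, intervalIntegral.integral_const_mul, hsub]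
    ring
  have hintbound :
      ‖∫ t in (0:ℝ)..1, P ((fderiv ℂ F (x + t • d) - fderiv ℂ F xhat) d)‖
        ≤ ω / 2 * (‖d‖ * ‖d‖) := by
    calc ‖∫ t in (0:ℝ)..1, P ((fderiv ℂ F (x + t • d) - fderiv ℂ F xhat) d)‖
        ≤ ∫ t in (0:ℝ)..1, ‖P ((fderiv ℂ F (x + t • d) - fderiv ℂ F xhat) d)‖ :=
          intervalIntegral.norm_integral_le_integral_norm zero_le_one
      _ ≤ ∫ t in (0:ℝ)..1, ω * (1 - t) * ‖d‖ * ‖d‖ :=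
          intervalIntegral.integral_mono_on zero_le_one hEnormint hgint hbound
      _ = ω / 2 * (‖d‖ * ‖d‖) := hgval
  have hfinal : ‖P (F xhat)‖ ≤ ‖d‖ + ω / 2 * (‖d‖ * ‖d‖) := by
    rw [hPF2]
    exact (norm_add_le _ _).trans (add_le_add le_rfl hintbound)
  have hdn : (0:ℝ) ≤ ‖d‖ := norm_nonneg d
  have h2 : ‖d‖ * ‖d‖ ≤ (η * Δt ^ p) * (η * Δt ^ p) :=
    mul_le_mul hclose hclose hdn (hdn.trans hclose)
  have h3 : ω / 2 * (‖d‖ * ‖d‖) ≤ ω / 2 * ((η * Δt ^ p) * (η * Δt ^ p)) :=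
    mul_le_mul_of_nonneg_left h2 (by linarith)
  calc ‖P (F xhat)‖ ≤ ‖d‖ + ω / 2 * (‖d‖ * ‖d‖) := hfinal
    _ ≤ η * Δt ^ p + ω / 2 * ((η * Δt ^ p) * (η * Δt ^ p)) := by linarith
    _ = η * Δt ^ p * (1 + ω / 2 * (η * Δt ^ p)) := by ring
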